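/- Let 0 < p < ∞ and s < 1/p - 1, and 0 < q < ∞. For N ≥ 1 let f_N = 2^N 𝟙_{[0,2^{-N})}. Then for all M > N ≥ 1, the dyadic Besov distance satisfies ‖f_M - f_N‖_{B^{s,dyad}_{p,q}} = (Σ_{j=N}^{M-1} 2^{j(s+1-1/p)q})^{1/q}, which tends to 0 as N → ∞; hence (f_N) is a Cauchy sequence in the B^{s,dyad}_{p,q} quasi-norm. -/

import Mathlib

open MeasureTheory Real

/-- The Haar mother function `h = 𝟙_{[0,1/2)} - 𝟙_{[1/2,1)}`. -/
noncomputable def haar (x : ℝ) : ℝ :=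
  if 0 ≤ x ∧ x < 1/2 then 1 else if 1/2 ≤ x ∧ x < 1 then -1 else 0

/-- The dyadic Besov quasi-norm `‖g‖_{B^{s,dyad}_{p,q}}` for `0 < p, q < ∞`. -/
noncomputable def dyadNorm (s p q : ℝ) (g : ℝ → ℝ) : ℝ :=
  (∑' j : ℕ, (2 ^ ((j:ℝ) * (s - 1/p)) *
    (∑' μ : ℤ, |2 ^ j * ∫ x : ℝ, g x * haar (2 ^ j * x - (μ : ℝ))| ^ p) ^ (1/p)) ^ q) ^ (1/q)

/-- `f_N = 2^N 𝟙_{[0,2^{-N})}`. -/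
noncomputable def fStep (N : ℕ) : ℝ → ℝ := fun x =>
  2 ^ N * Set.indicator (Set.Ico (0:ℝ) (2 ^ (-(N:ℝ)))) (fun _ => (1:ℝ)) x

lemma integral_indicator_one_Ico (a b : ℝ) :
    ∫ x : ℝ, Set.indicator (Set.Ico a b) (fun _ => (1:ℝ)) x = max (b - a) 0 := by
  rw [integral_indicator measurableSet_Ico]
  simp [Real.volume_Ico, ENNReal.toReal_ofReal']

lemma integrable_indicator_Ico (a b : ℝ) :
    Integrable (Set.indicator (Set.Ico a b) (fun _ => (1:ℝ))) := by
  rw [integrable_indicator_iff measurableSet_Ico]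
  exact (integrableOn_const_iff (by simp)).mpr (Or.inr measure_Ico_lt_top)

lemma haar_comp (j : ℕ) (μ : ℤ) (x : ℝ) :
    haar (2 ^ j * x - μ) =
      Set.indicator (Set.Ico ((μ:ℝ)/2^j) (((μ:ℝ)+1/2)/2^j)) (fun _ => (1:ℝ)) x
      - Set.indicator (Set.Ico (((μ:ℝ)+1/2)/2^j) (((μ:ℝ)+1)/2^j)) (fun _ => (1:ℝ)) x := by
  have h2 : (0:ℝ) < 2^j := by positivity
  have hA : x ∈ Set.Ico ((μ:ℝ)/2^j) (((μ:ℝ)+1/2)/2^j) ↔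
      (0 ≤ 2^j*x - (μ:ℝ) ∧ 2^j*x-(μ:ℝ) < 1/2) := by
    simp only [Set.mem_Ico, div_le_iff₀ h2, lt_div_iff₀ h2]
    constructor <;> rintro ⟨h1', h2'⟩ <;> constructor <;> nlinarith
  have hB : x ∈ Set.Ico (((μ:ℝ)+1/2)/2^j) (((μ:ℝ)+1)/2^j) ↔
      ((1:ℝ)/2 ≤ 2^j*x - (μ:ℝ) ∧ 2^j*x-(μ:ℝ) < 1) := by
    simp only [Set.mem_Ico, div_le_iff₀ h2, lt_div_iff₀ h2]
    constructor <;> rintro ⟨h1', h2'⟩ <;> constructor <;> nlinarith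
  unfold haar
  rw [Set.indicator_apply, Set.indicator_apply]
  simp only [hA, hB]
  split_ifs with hc1 hc2 <;> first | linarith [hc1.2, hc2.1] | norm_num


lemma fStep_mul_haar (K j : ℕ) (μ : ℤ) (x : ℝ) :
    fStep K x * haar (2 ^ j * x - μ) =
      2^K * (Set.indicator (Set.Ico (max 0 ((μ:ℝ)/2^j)) (min ((2:ℝ)^(-(K:ℝ))) (((μ:ℝ)+1/2)/2^j))) (fun _ => (1:ℝ)) x
           - Set.indicator (Set.Ico (max 0 (((μ:ℝ)+1/2)/2^j)) (min ((2:ℝ)^(-(K:ℝ))) (((μ:ℝ)+1)/2^j))) (fun _ => (1:ℝ)) x) := by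
  rw [haar_comp]
  unfold fStep
  rw [← Set.Ico_inter_Ico, ← Set.Ico_inter_Ico]
  simp only [Set.indicator_apply, Set.mem_inter_iff]
  split_ifs <;> first | tauto | ring

lemma integral_fStep_haar (K j : ℕ) (μ : ℤ) :
    (∫ x : ℝ, fStep K x * haar (2 ^ j * x - μ)) = if μ = 0 ∧ j < K then 1 else 0 := by
  have h2j : (0:ℝ) < 2^j := by positivity
  have h2K : (0:ℝ) < 2^K := by positivity
  have ht : (2:ℝ)^(-(K:ℝ)) = ((2:ℝ)^K)⁻¹ := by
    rw [Real.rpow_neg (by norm_num), Real.rpow_natCast]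
  simp only [fStep_mul_haar]
  rw [MeasureTheory.integral_const_mul,
      integral_sub (integrable_indicator_Ico _ _) (integrable_indicator_Ico _ _),
      integral_indicator_one_Ico, integral_indicator_one_Ico, ht]
  set t := ((2:ℝ)^K)⁻¹ with htdef
  set a := (μ:ℝ)/2^j with hadef
  set b := ((μ:ℝ)+1/2)/2^j with hbdef
  set c := ((μ:ℝ)+1)/2^j with hcdef
  have htpos : 0 < t := by positivity
  have hab : a ≤ b := by
    rw [hadef, hbdef, div_le_div_iff_of_pos_right h2j]; linarith
  have hbc : b ≤ c := by
    rw [hbdef, hcdef, div_le_div_iff_of_pos_right h2j]; linarith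
  rcases lt_trichotomy μ 0 with hμ | hμ | hμ
  · -- μ < 0 : everything vanishes
    have hμ1 : (μ:ℝ) ≤ -1 := by exact_mod_cast (by omega : μ ≤ -1)
    have hb : b < 0 := div_neg_of_neg_of_pos (by linarith) h2j
    have hc : c ≤ 0 := by
      rw [hcdef]
      exact div_nonpos_of_nonpos_of_nonneg (by linarith) h2j.le
    rw [max_eq_right (by linarith [min_le_right t b, le_max_left (0:ℝ) a] : min t b - max 0 a ≤ 0),
        max_eq_right (by linarith [min_le_right t c, le_max_left (0:ℝ) b] : min t c - max 0 b ≤ 0),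
        if_neg (by omega : ¬(μ = 0 ∧ j < K))]
    ring
  · -- μ = 0
    subst hμ
    have ha0 : a = 0 := by rw [hadef]; norm_num
    have hbval : b = ((2:ℝ)^(j+1))⁻¹ := by
      rw [hbdef]; push_cast; rw [pow_succ]; field_simp; ring
    have hcval : c = ((2:ℝ)^j)⁻¹ := by
      rw [hcdef]; push_cast; field_simp; norm_num
    have hbpos : 0 < b := by rw [hbval]; positivity
    rcases lt_or_ge j K with hjK | hjK
    · -- j < K, integral = 1
      have htb : t ≤ b := by
        rw [htdef, hbval]
        exact inv_anti₀ (by positivity) (pow_le_pow_right₀ (by norm_num) hjK)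
      rw [min_eq_left htb, min_eq_left (le_trans htb hbc), ha0, max_self,
          max_eq_right hbpos.le, sub_zero, max_eq_left htpos.le,
          max_eq_right (by linarith : t - b ≤ 0), sub_zero, htdef,
          mul_inv_cancel₀ h2K.ne', if_pos ⟨rfl, hjK⟩]
    · -- K ≤ j, integral = 0
      have hct : c ≤ t := by
        rw [htdef, hcval]
        exact inv_anti₀ (by positivity) (pow_le_pow_right₀ (by norm_num) hjK)
      rw [min_eq_right (le_trans hbc hct), min_eq_right hct, ha0, max_self, sub_zero,
          max_eq_right hbpos.le, max_eq_left hbpos.le,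
          max_eq_left (by linarith : (0:ℝ) ≤ c - b),
          if_neg (by omega : ¬((0:ℤ) = 0 ∧ j < K))]
      have : b - (c - b) = 0 := by rw [hbval, hcval, pow_succ]; field_simp; ring
      rw [this, mul_zero]
  · -- μ ≥ 1
    have hμ1 : (1:ℝ) ≤ (μ:ℝ) := by exact_mod_cast hμ
    have ha0 : 0 ≤ a := by rw [hadef]; positivity
    rw [if_neg (by omega : ¬(μ = 0 ∧ j < K))]
    rcases le_or_gt t a with hta | hat
    · rw [max_eq_right (by linarith [min_le_left t b, le_max_right (0:ℝ) a] : min t b - max 0 a ≤ 0),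
          max_eq_right (by linarith [min_le_left t c, le_max_right (0:ℝ) b] : min t c - max 0 b ≤ 0)]
      ring
    · -- a < t: show c ≤ t via integer argument
      have hat' : (μ:ℝ) < t * 2^j := (div_lt_iff₀ h2j).mp hat
      have h1 : (μ:ℝ) * 2^K < 2^j := by
        have := mul_lt_mul_of_pos_right hat' h2K
        rwa [htdef, mul_comm ((2:ℝ)^K)⁻¹ _, mul_assoc, inv_mul_cancel₀ h2K.ne', mul_one] at this
      have h1' : μ * 2^K < 2^j := by exact_mod_cast h1
      have hKj : K ≤ j := by
        by_contra hcon
        push_neg at hcon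
        have e1 : (2:ℤ)^K ≤ μ * 2^K := le_mul_of_one_le_left (by positivity) (by exact_mod_cast hμ)
        have e2 : (2:ℤ)^j ≤ 2^K := pow_le_pow_right₀ (by norm_num) hcon.le
        linarith
      have h2 : (μ + 1) * 2^K ≤ 2^j := by
        have hpow : (2:ℤ)^j = 2^(j-K) * 2^K := by rw [← pow_add]; congr 1; omega
        have hμlt : μ < 2^(j-K) := by
          rw [hpow] at h1'; exact lt_of_mul_lt_mul_right h1' (by positivity)
        calc (μ+1)*2^K ≤ 2^(j-K)*2^K :=
              mul_le_mul_of_nonneg_right (by omega) (by positivity)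
        _ = 2^j := hpow.symm
      have h2R : ((μ:ℝ)+1) * 2^K ≤ 2^j := by exact_mod_cast h2
      have hct : c ≤ t := by
        rw [hcdef, htdef, div_le_iff₀ h2j, mul_comm, ← div_eq_mul_inv, le_div_iff₀ h2K]
        exact h2R
      have hba : b - a = (1/2)/2^j := by rw [hbdef, hadef, div_sub_div_same]; ring_nf
      have hcb : c - b = (1/2)/2^j := by rw [hcdef, hbdef, div_sub_div_same]; ring_nf
      rw [min_eq_right (le_trans hbc hct), min_eq_right hct, max_eq_right ha0,
          max_eq_right (le_trans ha0 hab),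
          max_eq_left (by linarith : 0 ≤ b - a), max_eq_left (by linarith : 0 ≤ c - b),
          hba, hcb, sub_self, mul_zero]

lemma integrable_fStep_haar (K j : ℕ) (μ : ℤ) :
    Integrable (fun x => fStep K x * haar (2 ^ j * x - μ)) := by
  have h : (fun x => fStep K x * haar (2 ^ j * x - μ)) =
      fun x => (2:ℝ)^K *
        (Set.indicator (Set.Ico (max 0 ((μ:ℝ)/2^j)) (min ((2:ℝ)^(-(K:ℝ))) (((μ:ℝ)+1/2)/2^j))) (fun _ => (1:ℝ)) x
        - Set.indicator (Set.Ico (max 0 (((μ:ℝ)+1/2)/2^j)) (min ((2:ℝ)^(-(K:ℝ))) (((μ:ℝ)+1)/2^j))) (fun _ => (1:ℝ)) x) :=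
    funext (fStep_mul_haar K j μ)
  rw [h]
  exact ((integrable_indicator_Ico _ _).sub (integrable_indicator_Ico _ _)).const_mul _

lemma integral_diff_haar (N M j : ℕ) (μ : ℤ) (hNM : N ≤ M) :
    (∫ x : ℝ, (fStep M x - fStep N x) * haar (2 ^ j * x - μ))
      = if μ = 0 ∧ N ≤ j ∧ j < M then 1 else 0 := by
  have h : (fun x : ℝ => (fStep M x - fStep N x) * haar (2 ^ j * x - μ))
      = fun x => fStep M x * haar (2 ^ j * x - μ) - fStep N x * haar (2 ^ j * x - μ) := by
    funext x; ring
  rw [h, integral_sub (integrable_fStep_haar M j μ) (integrable_fStep_haar N j μ),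
      integral_fStep_haar, integral_fStep_haar]
  split_ifs <;> first | omega | norm_num

lemma dyadNorm_diff (p q s : ℝ) (hp : 0 < p) (hq : 0 < q) (N M : ℕ) (hNM : N ≤ M) :
    dyadNorm s p q (fun x => fStep M x - fStep N x)
      = (∑ j ∈ Finset.Ico N M, (2:ℝ) ^ ((j:ℝ) * (s + 1 - 1/p) * q)) ^ (1/q) := by
  unfold dyadNorm
  congr 1
  have hterm : ∀ j : ℕ, ((2:ℝ) ^ ((j:ℝ) * (s - 1/p)) *
      (∑' μ : ℤ, |(2:ℝ) ^ j * ∫ x : ℝ, (fStep M x - fStep N x) * haar (2 ^ j * x - (μ : ℝ))| ^ p) ^ (1/p)) ^ q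
      = if N ≤ j ∧ j < M then (2:ℝ) ^ ((j:ℝ) * (s + 1 - 1/p) * q) else 0 := by
    intro j
    by_cases hj : N ≤ j ∧ j < M
    · have hsum : (∑' μ : ℤ, |(2:ℝ) ^ j * ∫ x : ℝ, (fStep M x - fStep N x) * haar (2 ^ j * x - (μ : ℝ))| ^ p)
          = ((2:ℝ)^j) ^ p := by
        rw [tsum_eq_single 0 ?_]
        · rw [integral_diff_haar _ _ _ _ hNM, if_pos ⟨rfl, hj⟩, mul_one,
              abs_of_pos (by positivity : (0:ℝ) < 2^j)]
        · intro μ hμ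
          rw [integral_diff_haar _ _ _ _ hNM, if_neg (by tauto), mul_zero, abs_zero,
              Real.zero_rpow hp.ne']
      rw [hsum, if_pos hj]
      have h1 : (((2:ℝ)^j) ^ p) ^ (1/p) = (2:ℝ)^j := by
        rw [← Real.rpow_natCast 2 j, ← Real.rpow_mul (by norm_num), ← Real.rpow_mul (by norm_num),
            mul_one_div, div_self hp.ne', mul_one]
      rw [h1, ← Real.rpow_natCast 2 j, ← Real.rpow_add (by norm_num),
          ← Real.rpow_mul (by norm_num)]
      congr 1
      ring
    · have hsum : (∑' μ : ℤ, |(2:ℝ) ^ j * ∫ x : ℝ, (fStep M x - fStep N x) * haar (2 ^ j * x - (μ : ℝ))| ^ p)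
          = 0 := by
        convert tsum_zero with μ
        rw [integral_diff_haar _ _ _ _ hNM, if_neg (by tauto), mul_zero, abs_zero, Real.zero_rpow hp.ne']
      rw [hsum, Real.zero_rpow (one_div_ne_zero hp.ne'), mul_zero,
          Real.zero_rpow hq.ne', if_neg hj]
  rw [tsum_congr hterm, tsum_eq_sum (s := Finset.Ico N M) ?_]
  · exact Finset.sum_congr rfl fun j hj => if_pos (Finset.mem_Ico.mp hj)
  · intro j hj
    exact if_neg (fun h => hj (Finset.mem_Ico.mpr h))

/-- For `s < 1/p - 1`: explicit dyadic Besov distance of the functions `f_N`,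
and the resulting Cauchy property. -/
theorem fStep_cauchy_in_dyadic_besov (p q s : ℝ) (hp : 0 < p) (hq : 0 < q)
    (hs : s < 1/p - 1) :
    (∀ M N : ℕ, 1 ≤ N → N < M →
      dyadNorm s p q (fun x => fStep M x - fStep N x)
        = (∑ j ∈ Finset.Ico N M, (2:ℝ) ^ ((j:ℝ) * (s + 1 - 1/p) * q)) ^ (1/q)) ∧
    (∀ ε : ℝ, 0 < ε → ∃ N₀ : ℕ, 1 ≤ N₀ ∧ ∀ M N : ℕ, N₀ ≤ N → N < M →
      dyadNorm s p q (fun x => fStep M x - fStep N x) < ε) := by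
  constructor
  · intro M N _ hNM
    exact dyadNorm_diff p q s hp hq N M hNM.le
  · intro ε hε
    set c := s + 1 - 1/p with hcdef
    have hc : c < 0 := by rw [hcdef]; linarith
    set r := (2:ℝ) ^ (c * q) with hrdef
    have hr0 : 0 < r := Real.rpow_pos_of_pos (by norm_num) _
    have hr1 : r < 1 := Real.rpow_lt_one_of_one_lt_of_neg (by norm_num)
      (mul_neg_of_neg_of_pos hc hq)
    have hterm : ∀ j : ℕ, (2:ℝ) ^ ((j:ℝ) * c * q) = r ^ j := by
      intro j
      rw [hrdef, ← Real.rpow_natCast ((2:ℝ)^(c*q)) j, ← Real.rpow_mul (by norm_num)]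
      congr 1
      ring
    have hεq : 0 < ε ^ q := Real.rpow_pos_of_pos hε q
    have htend : Filter.Tendsto (fun n : ℕ => r ^ n * (1-r)⁻¹) Filter.atTop (nhds 0) := by
      have := (tendsto_pow_atTop_nhds_zero_of_lt_one hr0.le hr1).mul_const (1-r)⁻¹
      simpa using this
    obtain ⟨N₀, hN₀⟩ := Filter.eventually_atTop.mp (htend.eventually_lt_const hεq)
    refine ⟨max N₀ 1, le_max_right _ _, ?_⟩
    intro M N hN hNM
    rw [dyadNorm_diff p q s hp hq N M hNM.le]
    have hSle : (∑ j ∈ Finset.Ico N M, (2:ℝ) ^ ((j:ℝ) * c * q)) ≤ r ^ N * (1-r)⁻¹ := by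
      calc (∑ j ∈ Finset.Ico N M, (2:ℝ) ^ ((j:ℝ) * c * q))
          = ∑ j ∈ Finset.Ico N M, r ^ j := Finset.sum_congr rfl fun j _ => hterm j
        _ = ∑ i ∈ Finset.range (M - N), r ^ (N + i) := Finset.sum_Ico_eq_sum_range _ _ _
        _ = r ^ N * ∑ i ∈ Finset.range (M - N), r ^ i := by
            rw [Finset.mul_sum]; exact Finset.sum_congr rfl fun i _ => pow_add r N i
        _ ≤ r ^ N * (1-r)⁻¹ := by
            apply mul_le_mul_of_nonneg_left _ (pow_nonneg hr0.le N)
            rw [← tsum_geometric_of_lt_one hr0.le hr1]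
            exact Summable.sum_le_tsum _ (fun i _ => pow_nonneg hr0.le i)
              (summable_geometric_of_lt_one hr0.le hr1)
    have hSlt : (∑ j ∈ Finset.Ico N M, (2:ℝ) ^ ((j:ℝ) * c * q)) < ε ^ q := by
      have h1 : r ^ N ≤ r ^ N₀ :=
        pow_le_pow_of_le_one hr0.le hr1.le (le_trans (le_max_left _ _) hN)
      have h2 : r ^ N * (1-r)⁻¹ ≤ r ^ N₀ * (1-r)⁻¹ :=
        mul_le_mul_of_nonneg_right h1 (inv_nonneg.mpr (by linarith))
      exact lt_of_le_of_lt (le_trans hSle h2) (hN₀ N₀ le_rfl)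
    have hS0 : 0 ≤ ∑ j ∈ Finset.Ico N M, (2:ℝ) ^ ((j:ℝ) * c * q) :=
      Finset.sum_nonneg fun j _ => (Real.rpow_pos_of_pos (by norm_num) _).le
    calc (∑ j ∈ Finset.Ico N M, (2:ℝ) ^ ((j:ℝ) * c * q)) ^ (1/q)
        < (ε ^ q) ^ (1/q) := Real.rpow_lt_rpow hS0 hSlt (by positivity)
      _ = ε := by
          rw [← Real.rpow_mul hε.le, mul_one_div, div_self hq.ne', Real.rpow_one]
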